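/- Suppose every γₖ is real. Then the family (1/(γₖ(1 + γₖ²)))_{k∈I} is summable, and setting C := −B − Σₖ 1/(γₖ(1 + γₖ²)), for every t ≥ 0 one has g(t) = iCt − (m₀/2) t² + Σₖ (e^{−iγₖ t} − 1 + iγₖ t/(1 + γₖ²))/γₖ², where the last series converges absolutely. -/

import Mathlib

theorem screw_canonical_representation {I : Type*} [Countable I] (B θ : ℝ) (m₀ : ℕ)
    (γ : I → ℂ) (hθ : 0 ≤ θ) (hγ : ∀ k, γ k ≠ 0)
    (hsum : Summable fun k => 1 / ‖γ k‖ ^ 2)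
    (him : ∀ k, |(γ k).im| ≤ θ)
    (hreal : ∀ k, (γ k).im = 0) :
    (Summable fun k => 1 / (γ k * (1 + (γ k) ^ 2))) ∧
    ∀ t : ℝ, 0 ≤ t →
      (Summable fun k =>
        ‖(Complex.exp (-Complex.I * γ k * t) - 1
            + Complex.I * γ k * t / (1 + (γ k) ^ 2)) / (γ k) ^ 2‖) ∧
      -Complex.I * (B : ℂ) * (t : ℂ) - (m₀ : ℂ) / 2 * (t : ℂ) ^ 2
          + ∑' k, (Complex.exp (-Complex.I * γ k * t) - 1) / (γ k) ^ 2
        = Complex.I * (-(B : ℂ) - ∑' k, 1 / (γ k * (1 + (γ k) ^ 2))) * (t : ℂ)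
            - (m₀ : ℂ) / 2 * (t : ℂ) ^ 2
            + ∑' k, (Complex.exp (-Complex.I * γ k * t) - 1
                + Complex.I * γ k * t / (1 + (γ k) ^ 2)) / (γ k) ^ 2 := by
  have hre : ∀ k, γ k = ((γ k).re : ℂ) := fun k =>
    Complex.ext (by simp) (by simp [hreal k])
  have hx : ∀ k, (γ k).re ≠ 0 := by
    intro k hk
    exact hγ k (by rw [hre k, hk]; simp)
  have hnormγ : ∀ k, ‖γ k‖ = |(γ k).re| := by
    intro k; rw [hre k]; exact Complex.norm_real _
  have h1 : ∀ k, (1 : ℂ) + (γ k) ^ 2 = ((1 + (γ k).re ^ 2 : ℝ) : ℂ) := by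
    intro k
    simp [Complex.ext_iff, pow_two, Complex.add_re, Complex.add_im,
      Complex.mul_re, Complex.mul_im, hreal k]
  have hne1 : ∀ k, (1 : ℂ) + (γ k) ^ 2 ≠ 0 := by
    intro k; rw [h1 k]
    exact Complex.ofReal_ne_zero.mpr (ne_of_gt (by positivity))
  have hnormprod : ∀ k, ‖γ k * (1 + (γ k) ^ 2)‖ = |(γ k).re| * (1 + (γ k).re ^ 2) := by
    intro k
    rw [norm_mul, hnormγ k, h1 k, Complex.norm_real, Real.norm_eq_abs,
      abs_of_pos (show (0:ℝ) < 1 + (γ k).re ^ 2 by positivity)]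
  have hpos2 : ∀ k, (0:ℝ) < ‖γ k‖ ^ 2 := fun k =>
    pow_pos (norm_pos_iff.mpr (hγ k)) 2
  -- summability of 1/(γ(1+γ²))
  have hS : Summable fun k => 1 / (γ k * (1 + (γ k) ^ 2)) := by
    apply Summable.of_norm_bounded hsum
    intro k
    rw [norm_div, norm_one, hnormprod k, hnormγ k]
    have hx0 : (0:ℝ) < |(γ k).re| := abs_pos.mpr (hx k)
    apply one_div_le_one_div_of_le (by positivity)
    nlinarith [sq_abs ((γ k).re)]
  refine ⟨hS, fun t ht => ?_⟩
  have hexp : ∀ k, ‖Complex.exp (-Complex.I * γ k * t)‖ = 1 := by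
    intro k
    rw [hre k, Complex.norm_exp]
    simp [Complex.mul_re]
  have hw : ∀ k, ‖Complex.I * γ k * t / (1 + (γ k) ^ 2)‖ ≤ t := by
    intro k
    rw [norm_div, norm_mul, norm_mul, Complex.norm_I, one_mul, hnormγ k,
      h1 k, Complex.norm_real, Real.norm_eq_abs, Complex.norm_real,
      Real.norm_eq_abs, abs_of_pos (show (0:ℝ) < 1 + (γ k).re ^ 2 by positivity),
      abs_of_nonneg ht]
    rw [div_le_iff₀ (by positivity)]
    nlinarith [sq_abs ((γ k).re), abs_nonneg ((γ k).re), sq_nonneg (|(γ k).re| - 1)]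
  have hbig : ∀ k, ‖Complex.exp (-Complex.I * γ k * t) - 1
      + Complex.I * γ k * t / (1 + (γ k) ^ 2)‖ ≤ 2 + t := by
    intro k
    calc ‖Complex.exp (-Complex.I * γ k * t) - 1
          + Complex.I * γ k * t / (1 + (γ k) ^ 2)‖
        ≤ ‖Complex.exp (-Complex.I * γ k * t) - 1‖
            + ‖Complex.I * γ k * t / (1 + (γ k) ^ 2)‖ := norm_add_le _ _
      _ ≤ (‖Complex.exp (-Complex.I * γ k * t)‖ + ‖(1:ℂ)‖) + t :=
            add_le_add (norm_sub_le _ _) (hw k)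
      _ = 2 + t := by rw [hexp k, norm_one]; ring
  have hnormsum : Summable fun k =>
      ‖(Complex.exp (-Complex.I * γ k * t) - 1
          + Complex.I * γ k * t / (1 + (γ k) ^ 2)) / (γ k) ^ 2‖ := by
    apply Summable.of_nonneg_of_le (fun k => norm_nonneg _) _ (hsum.mul_left (2 + t))
    intro k
    rw [norm_div, norm_pow, mul_one_div, div_le_div_iff_of_pos_right (hpos2 k)]
    exact hbig k
  refine ⟨hnormsum, ?_⟩
  have hA : Summable fun k => (Complex.exp (-Complex.I * γ k * t) - 1) / (γ k) ^ 2 := by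
    apply Summable.of_norm_bounded (hsum.mul_left 2)
    intro k
    rw [norm_div, norm_pow, mul_one_div, div_le_div_iff_of_pos_right (hpos2 k)]
    calc ‖Complex.exp (-Complex.I * γ k * t) - 1‖
          ≤ ‖Complex.exp (-Complex.I * γ k * t)‖ + ‖(1:ℂ)‖ := norm_sub_le _ _
        _ = 2 := by rw [hexp k, norm_one]; norm_num
  have hsplit : ∀ k, (Complex.exp (-Complex.I * γ k * t) - 1
        + Complex.I * γ k * t / (1 + (γ k) ^ 2)) / (γ k) ^ 2
      = (Complex.exp (-Complex.I * γ k * t) - 1) / (γ k) ^ 2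
        + (Complex.I * t) * (1 / (γ k * (1 + (γ k) ^ 2))) := by
    intro k
    have h0 := hγ k
    have h1' := hne1 k
    field_simp
  have hts : ∑' k, (Complex.exp (-Complex.I * γ k * t) - 1
        + Complex.I * γ k * t / (1 + (γ k) ^ 2)) / (γ k) ^ 2
      = (∑' k, (Complex.exp (-Complex.I * γ k * t) - 1) / (γ k) ^ 2)
        + (Complex.I * t) * ∑' k, 1 / (γ k * (1 + (γ k) ^ 2)) := by
    simp only [hsplit]
    rw [Summable.tsum_add hA (hS.mul_left _), tsum_mul_left]
  rw [hts]
  ring
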